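/- Let (u, q) : ℝ → E × ℝ solve the augmented system u' + A u + q N(u) = F, q' - ⟪N(u), u⟫ = -γ q + γ, with A coercive with constant ℓ₀ > 0, ⟪N(x), x⟫ = 0 for all x, ‖F(t)‖ ≤ M, and γ > 0. Setting E(t) = ‖u(t)‖² + q(t)² and α = min(ℓ₀, γ), one has E(t) ≤ e^{-α t} E(0) + (1/α)((M²/ℓ₀) + γ)(1 - e^{-α t}) for all t ≥ 0. -/

import Mathlib

theorem stmt_3 {E : Type*} [NormedAddCommGroup E] [InnerProductSpace ℝ E]
    [FiniteDimensional ℝ E]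
    (A : E →L[ℝ] E) (ℓ₀ : ℝ) (hℓ₀ : 0 < ℓ₀)
    (hA : ∀ x : E, ℓ₀ * ‖x‖ ^ 2 ≤ (inner ℝ (A x) x : ℝ))
    (N : E → E) (hN : ∀ x : E, (inner ℝ (N x) x : ℝ) = 0)
    (F : ℝ → E) (M : ℝ) (hF : ∀ t : ℝ, ‖F t‖ ≤ M)
    (γ : ℝ) (hγ : 0 < γ)
    (u u' : ℝ → E) (q q' : ℝ → ℝ)
    (hu : ∀ t : ℝ, HasDerivAt u (u' t) t)
    (hq : ∀ t : ℝ, HasDerivAt q (q' t) t)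
    (hequ : ∀ t : ℝ, u' t + A (u t) + q t • N (u t) = F t)
    (heqq : ∀ t : ℝ, q' t - (inner ℝ (N (u t)) (u t) : ℝ) = -γ * q t + γ) :
    ∀ t : ℝ, 0 ≤ t →
      ‖u t‖ ^ 2 + (q t) ^ 2 ≤
        Real.exp (-(min ℓ₀ γ) * t) * (‖u 0‖ ^ 2 + (q 0) ^ 2) +
          (1 / min ℓ₀ γ) * (M ^ 2 / ℓ₀ + γ) * (1 - Real.exp (-(min ℓ₀ γ) * t)) := by
  intro t ht
  have hM : 0 ≤ M := le_trans (norm_nonneg _) (hF 0)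
  set α : ℝ := min ℓ₀ γ with hαdef
  have hα0 : 0 < α := lt_min hℓ₀ hγ
  set C : ℝ := M ^ 2 / ℓ₀ + γ with hCdef
  set φ : ℝ → ℝ := fun s => ‖u s‖ ^ 2 + (q s) ^ 2 with hφdef
  set φ' : ℝ → ℝ := fun s =>
    ((inner ℝ (u' s) (u s) : ℝ) + (inner ℝ (u s) (u' s) : ℝ)) + (q' s * q s + q s * q' s)
    with hφ'def
  have hφ : ∀ s, HasDerivAt φ (φ' s) s := by
    intro s
    have h1 : HasDerivAt (fun s => (inner ℝ (u s) (u s) : ℝ))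
        ((inner ℝ (u' s) (u s) : ℝ) + (inner ℝ (u s) (u' s) : ℝ)) s := by
      simpa [add_comm] using (hu s).inner ℝ (hu s)
    have h2 : HasDerivAt (fun s => q s * q s) (q' s * q s + q s * q' s) s :=
      (hq s).mul (hq s)
    have heq : φ = fun s => (inner ℝ (u s) (u s) : ℝ) + q s * q s := by
      funext s
      simp [hφdef, real_inner_self_eq_norm_sq, sq]
    rw [heq]
    exact h1.add h2
  -- key differential inequality
  have hkey : ∀ s, φ' s ≤ -α * φ s + C := by
    intro s
    have hu' : u' s = F s - A (u s) - q s • N (u s) := by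
      have h := hequ s
      rw [← h]; abel
    have hinner : (inner ℝ (u' s) (u s) : ℝ) =
        (inner ℝ (F s) (u s) : ℝ) - (inner ℝ (A (u s)) (u s) : ℝ) := by
      rw [hu', inner_sub_left, inner_sub_left, real_inner_smul_left, hN, mul_zero, sub_zero]
    have hinner2 : (inner ℝ (u s) (u' s) : ℝ) =
        (inner ℝ (F s) (u s) : ℝ) - (inner ℝ (A (u s)) (u s) : ℝ) := by
      rw [real_inner_comm]; exact hinner
    have hq' : q' s = -γ * q s + γ := by
      have h := heqq s
      rw [hN] at h
      linarith
    have hFu : (inner ℝ (F s) (u s) : ℝ) ≤ M * ‖u s‖ := by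
      calc (inner ℝ (F s) (u s) : ℝ) ≤ ‖F s‖ * ‖u s‖ := real_inner_le_norm _ _
        _ ≤ M * ‖u s‖ := by
          exact mul_le_mul_of_nonneg_right (hF s) (norm_nonneg _)
    have hAu := hA (u s)
    have h2M : 2 * (M * ‖u s‖) ≤ ℓ₀ * ‖u s‖ ^ 2 + M ^ 2 / ℓ₀ := by
      have hM2 : M ^ 2 = ℓ₀ * (M ^ 2 / ℓ₀) := by field_simp
      nlinarith [sq_nonneg (M - ℓ₀ * ‖u s‖), hℓ₀]
    have hαl : α ≤ ℓ₀ := min_le_left _ _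
    have hαg : α ≤ γ := min_le_right _ _
    simp only [hφ'def, hφdef, hCdef, hinner, hinner2, hq']
    nlinarith [sq_nonneg (q s - 1), sq_nonneg (‖u s‖), sq_nonneg (q s),
      mul_le_mul_of_nonneg_right hαl (sq_nonneg (‖u s‖)),
      mul_le_mul_of_nonneg_right hαg (sq_nonneg (q s))]
  -- ψ is antitone
  set ψ : ℝ → ℝ := fun s => Real.exp (α * s) * (φ s - C / α) with hψdef
  have hψ : ∀ s, HasDerivAt ψ
      (α * Real.exp (α * s) * (φ s - C / α) + Real.exp (α * s) * φ' s) s := by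
    intro s
    have he : HasDerivAt (fun s => Real.exp (α * s)) (α * Real.exp (α * s)) s := by
      have := ((hasDerivAt_id s).const_mul α).exp
      simpa [mul_comm] using this
    exact he.mul ((hφ s).sub_const _)
  have hψ' : ∀ s, α * Real.exp (α * s) * (φ s - C / α) + Real.exp (α * s) * φ' s ≤ 0 := by
    intro s
    have h1 := hkey s
    have h2 : α * (C / α) = C := by field_simp
    have hexp := (Real.exp_pos (α * s)).le
    have h3 : Real.exp (α * s) * φ' s ≤ Real.exp (α * s) * (-α * φ s + C) :=
      mul_le_mul_of_nonneg_left h1 hexp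
    have h4 : α * Real.exp (α * s) * (φ s - C / α) +
        Real.exp (α * s) * (-α * φ s + C) = 0 := by
      field_simp
      ring
    have h5 := add_le_add (le_refl (α * Real.exp (α * s) * (φ s - C / α))) h3
    rwa [h4] at h5
  have hanti : AntitoneOn ψ (Set.Ici (0 : ℝ)) := by
    apply antitoneOn_of_deriv_nonpos (convex_Ici 0)
    · exact fun s _ => ((hψ s).continuousAt).continuousWithinAt
    · intro s _
      exact ((hψ s).differentiableAt).differentiableWithinAt
    · intro s _
      rw [(hψ s).deriv]
      exact hψ' s
  have hstep : ψ t ≤ ψ 0 := hanti (Set.self_mem_Ici) ht ht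
  have hψ0 : ψ 0 = φ 0 - C / α := by simp [hψdef]
  rw [hψ0] at hstep
  have hepos := Real.exp_pos (-α * t)
  have hmul := mul_le_mul_of_nonneg_left hstep hepos.le
  have hee : Real.exp (-α * t) * Real.exp (α * t) = 1 := by
    rw [← Real.exp_add]; ring_nf; exact Real.exp_zero
  rw [hψdef] at hmul
  simp only at hmul
  rw [← mul_assoc, hee, one_mul] at hmul
  have hgoal_eq : Real.exp (-α * t) * (φ 0) + (1 / α) * C * (1 - Real.exp (-α * t)) =
      Real.exp (-α * t) * (φ 0 - C / α) + C / α := by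
    field_simp
    ring
  show φ t ≤ Real.exp (-α * t) * (φ 0) + (1 / α) * C * (1 - Real.exp (-α * t))
  rw [hgoal_eq]
  linarith
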